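/- Suppose n ≥ 2 and set φ = 1/(n−1). Let z be a random vector in {-1,1}^m with law D and define the exposure spread Q(z) = Σ_{i=1}^n (x_i(z) − (1/n) Σ_{j=1}^n x_j(z))². Then E[Q] = ((n−1)/n) · ( Σ_{i=1}^n Var[x_i] − φ Σ_{i≠j} Cov(x_i, x_j) ) + tr( Wᵀ (I_n − (1/n) 𝟏_n 𝟏_nᵀ) W · E[z] E[z]ᵀ ). In particular, the Exposure-Spread objective equals the Exposure-Design objective at φ = 1/(n−1) up to the multiplicative constant (n−1)/n and an additive constant depending only on E[z]. -/
import Mathlib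


open Finset Matrix

/-- The sign map from Booleans to `{-1, 1} ⊆ ℝ`. -/
def sgn (b : Bool) : ℝ := if b then 1 else -1

/-- Expectation of `f` under the (finitely supported) design `D`. -/
noncomputable def pexp {α : Type*} [Fintype α] (D f : α → ℝ) : ℝ :=
  ∑ ω, D ω * f ω

/-- Variance of `f` under the design `D`. -/
noncomputable def pvar {α : Type*} [Fintype α] (D f : α → ℝ) : ℝ :=
  pexp D (fun ω => (f ω - pexp D f) ^ 2)

/-- Covariance of `f` and `g` under the design `D`. -/
noncomputable def pcov {α : Type*} [Fintype α] (D f g : α → ℝ) : ℝ :=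
  pexp D (fun ω => (f ω - pexp D f) * (g ω - pexp D g))

lemma pexp_sum {α ι : Type*} [Fintype α] (D : α → ℝ) (s : Finset ι) (f : ι → α → ℝ) :
    pexp D (fun ω => ∑ i ∈ s, f i ω) = ∑ i ∈ s, pexp D (f i) := by
  unfold pexp
  simp only [Finset.mul_sum]
  exact Finset.sum_comm

lemma pexp_add {α : Type*} [Fintype α] (D f g : α → ℝ) :
    pexp D (fun ω => f ω + g ω) = pexp D f + pexp D g := by
  simp [pexp, mul_add, Finset.sum_add_distrib]

lemma pexp_sub {α : Type*} [Fintype α] (D f g : α → ℝ) :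
    pexp D (fun ω => f ω - g ω) = pexp D f - pexp D g := by
  simp [pexp, mul_sub, Finset.sum_sub_distrib]

lemma pexp_const_mul {α : Type*} [Fintype α] (D : α → ℝ) (c : ℝ) (f : α → ℝ) :
    pexp D (fun ω => c * f ω) = c * pexp D f := by
  simp only [pexp, Finset.mul_sum]
  apply Finset.sum_congr rfl; intros; ring

lemma pexp_const {α : Type*} [Fintype α] {D : α → ℝ} (hD1 : ∑ ω, D ω = 1) (c : ℝ) :
    pexp D (fun _ => c) = c := by
  simp [pexp, ← Finset.sum_mul, hD1]

lemma pcov_eq {α : Type*} [Fintype α] {D : α → ℝ} (hD1 : ∑ ω, D ω = 1) (f g : α → ℝ) :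
    pcov D f g = pexp D (fun ω => f ω * g ω) - pexp D f * pexp D g := by
  have h : (fun ω => (f ω - pexp D f) * (g ω - pexp D g))
      = fun ω => (f ω * g ω - (pexp D f * g ω + pexp D g * f ω)) + pexp D f * pexp D g := by
    funext ω; ring
  rw [pcov, h, pexp_add, pexp_sub, pexp_add, pexp_const_mul, pexp_const_mul, pexp_const hD1]
  ring

lemma pvar_eq {α : Type*} [Fintype α] {D : α → ℝ} (hD1 : ∑ ω, D ω = 1) (f : α → ℝ) :
    pvar D f = pexp D (fun ω => f ω * f ω) - pexp D f * pexp D f := by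
  have h : pvar D f = pcov D f f := by simp [pvar, pcov, sq]
  rw [h, pcov_eq hD1]

lemma aux_sum_ite {n : ℕ} (u : Fin n → ℝ) (c : ℝ) :
    ∑ x, u x * ∑ x', ((if x = x' then (1:ℝ) else 0) - c) * u x'
      = ∑ x, u x * u x - c * ∑ x, ∑ x', u x * u x' := by
  have h1 : ∀ x : Fin n, ∑ x', ((if x = x' then (1:ℝ) else 0) - c) * u x'
      = u x - c * ∑ x', u x' := by
    intro x
    simp [sub_mul, Finset.sum_sub_distrib, Finset.sum_ite_eq, Finset.mul_sum]
  simp only [h1]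
  simp only [mul_sub, Finset.sum_sub_distrib, Finset.mul_sum]
  congr 1
  exact Finset.sum_congr rfl fun x _ => Finset.sum_congr rfl fun y _ => by ring

lemma trace_aux (n m : ℕ) (W : Matrix (Fin n) (Fin m) ℝ) (Ez : Fin m → ℝ) (c : ℝ) :
    Matrix.trace
            ((Wᵀ * ((1 : Matrix (Fin n) (Fin n) ℝ)
                - c • Matrix.of (fun _ _ => (1 : ℝ))) * W)
              * Matrix.vecMulVec Ez Ez)
    = (∑ i, (∑ j, W i j * Ez j) * (∑ j, W i j * Ez j))
      - c * ∑ i, ∑ i', (∑ j, W i j * Ez j) * (∑ j, W i' j * Ez j) := by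
  have key : ∀ (M : Matrix (Fin m) (Fin m) ℝ),
      Matrix.trace (M * Matrix.vecMulVec Ez Ez) = Ez ⬝ᵥ M.mulVec Ez := by
    intro M
    simp only [Matrix.trace, Matrix.diag_apply, Matrix.mul_apply, Matrix.vecMulVec_apply,
      Matrix.mulVec, dotProduct]
    apply Finset.sum_congr rfl; intro j _
    rw [Finset.mul_sum]
    apply Finset.sum_congr rfl; intro k _; ring
  rw [key]
  rw [← Matrix.mulVec_mulVec, ← Matrix.mulVec_mulVec, Matrix.dotProduct_mulVec,
    Matrix.vecMul_transpose]
  simp only [Matrix.sub_mulVec, Matrix.one_mulVec, Matrix.smul_mulVec,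
    dotProduct_sub, dotProduct_smul, smul_eq_mul, Matrix.mulVec, dotProduct,
    Matrix.of_apply]
  simp only [Matrix.sub_apply, Matrix.one_apply, Matrix.smul_apply, Matrix.of_apply,
    smul_eq_mul, mul_one]
  exact aux_sum_ite (fun i => ∑ j, W i j * Ez j) c

/-- With `n ≥ 2` and `φ = 1/(n−1)`, the expected exposure spread equals
`((n−1)/n)` times the Exposure-Design objective plus the additive constant
`tr(Wᵀ (I_n − (1/n) 𝟏 𝟏ᵀ) W · E[z] E[z]ᵀ)` depending only on `E[z]`. -/
theorem exposure_spread_eq_exposure_design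
    (n m : ℕ) (hn : 2 ≤ n) (hm : 0 < m)
    (W : Matrix (Fin n) (Fin m) ℝ)
    (D : (Fin m → Bool) → ℝ) (hD0 : ∀ ω, 0 ≤ D ω) (hD1 : ∑ ω, D ω = 1)
    (φ : ℝ) (hφ : φ = 1 / ((n : ℝ) - 1))
    (x : Fin n → (Fin m → Bool) → ℝ)
    (hx : ∀ i ω, x i ω = ∑ j, W i j * sgn (ω j))
    (Q : (Fin m → Bool) → ℝ)
    (hQ : ∀ ω, Q ω = ∑ i, (x i ω - (1 / n : ℝ) * ∑ j, x j ω) ^ 2)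
    (Ez : Fin m → ℝ)
    (hEz : ∀ j, Ez j = pexp D (fun ω => sgn (ω j))) :
    pexp D Q
      = ((n : ℝ) - 1) / n *
          ((∑ i, pvar D (x i))
            - φ * ∑ pr ∈ (Finset.univ : Finset (Fin n)).offDiag,
                pcov D (x pr.1) (x pr.2))
        + Matrix.trace
            ((Wᵀ * ((1 : Matrix (Fin n) (Fin n) ℝ)
                - (1 / n : ℝ) • Matrix.of (fun _ _ => (1 : ℝ))) * W)
              * Matrix.vecMulVec Ez Ez) := by
  have hn0 : (n : ℝ) ≠ 0 := Nat.cast_ne_zero.mpr (by omega)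
  have hn2 : (2 : ℝ) ≤ (n : ℝ) := by exact_mod_cast hn
  have hn1 : (n : ℝ) - 1 ≠ 0 := by linarith
  -- mean of each exposure
  have hE : ∀ i, pexp D (x i) = ∑ j, W i j * Ez j := by
    intro i
    have hxi : x i = fun ω => ∑ j, W i j * sgn (ω j) := funext (hx i)
    rw [hxi, pexp_sum]
    exact Finset.sum_congr rfl fun j _ => by rw [pexp_const_mul, hEz]
  -- trace term
  have htr : Matrix.trace
            ((Wᵀ * ((1 : Matrix (Fin n) (Fin n) ℝ)
                - (1 / n : ℝ) • Matrix.of (fun _ _ => (1 : ℝ))) * W)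
              * Matrix.vecMulVec Ez Ez)
      = ∑ i, pexp D (x i) * pexp D (x i)
        - (1 / n : ℝ) * ∑ i, ∑ j, pexp D (x i) * pexp D (x j) := by
    rw [trace_aux n m W Ez (1 / n : ℝ)]
    simp only [hE]
  -- expected Q
  have hQ' : Q = fun ω => ∑ i, ((x i ω) * (x i ω)
      - (2 * (1 / n : ℝ)) * ∑ j, x i ω * x j ω
      + (1 / n : ℝ) ^ 2 * ∑ j, ∑ k, x j ω * x k ω) := by
    funext ω; rw [hQ]
    apply Finset.sum_congr rfl; intro i _
    rw [← Finset.mul_sum, ← Finset.sum_mul_sum]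
    ring
  have hPQ : pexp D Q = (∑ i, pexp D (fun ω => x i ω * x i ω))
      - (1 / n : ℝ) * ∑ i, ∑ j, pexp D (fun ω => x i ω * x j ω) := by
    rw [hQ', pexp_sum]
    simp only [pexp_add, pexp_sub, pexp_const_mul, pexp_sum]
    rw [Finset.sum_add_distrib, Finset.sum_sub_distrib, ← Finset.mul_sum,
      Finset.sum_const, Finset.card_univ, Fintype.card_fin, nsmul_eq_mul]
    field_simp
    ring
  -- off-diagonal covariance sum
  have hdiag : ∑ pr ∈ ((Finset.univ : Finset (Fin n)) ×ˢ Finset.univ).filter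
        (fun p => p.1 = p.2), pcov D (x pr.1) (x pr.2)
      = ∑ i, pcov D (x i) (x i) := by
    rw [Finset.sum_filter, Finset.sum_product]
    simp
  have hset : ((Finset.univ : Finset (Fin n)) ×ˢ Finset.univ).filter (fun p => ¬ p.1 = p.2)
      = (Finset.univ : Finset (Fin n)).offDiag := by
    ext p; simp [Finset.mem_offDiag]
  have hsplit := Finset.sum_filter_add_sum_filter_not
    ((Finset.univ : Finset (Fin n)) ×ˢ Finset.univ) (fun p => p.1 = p.2)
    (fun pr => pcov D (x pr.1) (x pr.2))
  rw [hset, Finset.sum_product, hdiag] at hsplit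
  have hoff : ∑ pr ∈ (Finset.univ : Finset (Fin n)).offDiag, pcov D (x pr.1) (x pr.2)
      = (∑ i, ∑ j, pcov D (x i) (x j)) - ∑ i, pcov D (x i) (x i) := by
    linarith
  rw [hPQ, hoff, htr, hφ]
  simp only [pcov_eq hD1, pvar_eq hD1, Finset.sum_sub_distrib]
  field_simp
  ring
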